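/- Let X and Y be compact ordered spaces and let f : X → Y be a continuous monotone map. Then f is surjective if and only if for all continuous monotone functions g₁, g₂ : Y → [0,1], g₁ ∘ f = g₂ ∘ f implies g₁ = g₂. (This is the concrete content of the statement that the epimorphisms in the category of compact ordered spaces are exactly the continuous monotone surjections.) -/

import Mathlib

open Set Filter Topology

section OrdUrysohn

variable {Z : Type*} [TopologicalSpace Z] [CompactSpace Z] [PartialOrder Z]
  [OrderClosedTopology Z]

lemma ordT2 : T2Space Z := by
  rw [t2_iff_isClosed_diagonal]
  have : (Set.diagonal Z) = {p : Z × Z | p.1 ≤ p.2} ∩ {p : Z × Z | p.2 ≤ p.1} := by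
    ext ⟨a, b⟩
    simp only [Set.mem_diagonal_iff, Set.mem_inter_iff, Set.mem_setOf_eq]
    exact ⟨fun h => by simp [h], fun ⟨h1, h2⟩ => le_antisymm h1 h2⟩
  rw [this]
  exact (OrderClosedTopology.isClosed_le').inter
    (IsClosed.preimage (continuous_snd.prodMk continuous_fst) OrderClosedTopology.isClosed_le')

lemma isClosed_upperClosure_of_isCompact {K : Set Z} (hK : IsCompact K) :
    IsClosed (↑(upperClosure K) : Set Z) := by
  have : T2Space Z := ordT2
  have : (↑(upperClosure K) : Set Z) =
      Prod.snd '' ({p : Z × Z | p.1 ≤ p.2} ∩ K ×ˢ (univ : Set Z)) := by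
    ext z
    simp only [SetLike.mem_coe, mem_upperClosure, mem_image, mem_inter_iff, mem_setOf_eq,
      mem_prod, mem_univ, and_true]
    constructor
    · rintro ⟨a, ha, haz⟩; exact ⟨(a, z), ⟨haz, ha⟩, rfl⟩
    · rintro ⟨⟨a, b⟩, ⟨hab, ha⟩, rfl⟩; exact ⟨a, ha, hab⟩
  rw [this]
  exact (((hK.prod isCompact_univ).inter_left OrderClosedTopology.isClosed_le').image
    continuous_snd).isClosed

lemma isClosed_lowerClosure_of_isCompact {K : Set Z} (hK : IsCompact K) :
    IsClosed (↑(lowerClosure K) : Set Z) := by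
  have : T2Space Z := ordT2
  have : (↑(lowerClosure K) : Set Z) =
      Prod.fst '' ({p : Z × Z | p.1 ≤ p.2} ∩ (univ : Set Z) ×ˢ K) := by
    ext z
    simp only [SetLike.mem_coe, mem_lowerClosure, mem_image, mem_inter_iff, mem_setOf_eq,
      mem_prod, mem_univ, true_and]
    constructor
    · rintro ⟨a, ha, haz⟩; exact ⟨(z, a), ⟨haz, ha⟩, rfl⟩
    · rintro ⟨⟨a, b⟩, ⟨hab, hb⟩, rfl⟩; exact ⟨b, hb, hab⟩
  rw [this]
  exact (((isCompact_univ.prod hK).inter_left OrderClosedTopology.isClosed_le').image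
    continuous_fst).isClosed

/-- Order normality for compact pospaces (Nachbin). -/
lemma ordNormal {A B : Set Z} (hA : IsClosed A) (hAl : IsLowerSet A)
    (hB : IsClosed B) (hBu : IsUpperSet B) (hd : Disjoint A B) :
    ∃ V W : Set Z, IsOpen V ∧ IsLowerSet V ∧ IsOpen W ∧ IsUpperSet W ∧
      A ⊆ V ∧ B ⊆ W ∧ Disjoint V W := by
  have : T2Space Z := ordT2
  obtain ⟨V₀, W₀, hV₀, hW₀, hAV₀, hBW₀, hVW₀⟩ :=
    SeparatedNhds.of_isCompact_isCompact hA.isCompact hB.isCompact hd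
  refine ⟨(↑(upperClosure V₀ᶜ))ᶜ, (↑(lowerClosure W₀ᶜ))ᶜ, ?_, ?_, ?_, ?_, ?_, ?_, ?_⟩
  · exact (isClosed_upperClosure_of_isCompact (hV₀.isClosed_compl.isCompact)).isOpen_compl
  · exact (upperClosure V₀ᶜ).upper.compl
  · exact (isClosed_lowerClosure_of_isCompact (hW₀.isClosed_compl.isCompact)).isOpen_compl
  · exact (lowerClosure W₀ᶜ).lower.compl
  · intro a ha hmem
    obtain ⟨z, hz, hza⟩ := mem_upperClosure.1 hmem
    exact hz (hAV₀ (hAl hza ha))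
  · intro b hb hmem
    obtain ⟨z, hz, hbz⟩ := mem_lowerClosure.1 hmem
    exact hz (hBW₀ (hBu hbz hb))
  · have h1 : (↑(upperClosure V₀ᶜ))ᶜ ⊆ V₀ := by
      intro z hz
      by_contra h
      exact hz (subset_upperClosure h)
    have h2 : (↑(lowerClosure W₀ᶜ))ᶜ ⊆ W₀ := by
      intro z hz
      by_contra h
      exact hz (subset_lowerClosure h)
    exact hVW₀.mono h1 h2

namespace OrdUrysohns

/-- Ordered analogue of `Urysohns.CU`. -/
structure CU (Z : Type*) [TopologicalSpace Z] [Preorder Z] where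
  protected C : Set Z
  protected U : Set Z
  protected closed_C : IsClosed C
  protected lower_C : IsLowerSet C
  protected open_U : IsOpen U
  protected lower_U : IsLowerSet U
  protected subset : C ⊆ U

namespace CU

variable {X : Type*} [TopologicalSpace X] [CompactSpace X] [PartialOrder X]
  [OrderClosedTopology X]

lemma step (c : CU X) :
    ∃ v : Set X, (IsOpen v ∧ IsLowerSet v ∧ c.C ⊆ v) ∧
      ∃ c' : Set X, IsClosed c' ∧ IsLowerSet c' ∧ v ⊆ c' ∧ c' ⊆ c.U := by
  obtain ⟨V, W, hV, hVl, hW, hWu, hCV, hUW, hVW⟩ := ordNormal c.closed_C c.lower_C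
    c.open_U.isClosed_compl (c.lower_U.compl) (disjoint_compl_right.mono_left c.subset)
  refine ⟨V, ⟨hV, hVl, hCV⟩, Wᶜ, hW.isClosed_compl, hWu.compl, hVW.subset_compl_right, ?_⟩
  intro z hz
  by_contra h
  exact hz (hUW h)

/-- The left child. -/
noncomputable def left (c : CU X) : CU X where
  C := c.C
  U := (c.step).choose
  closed_C := c.closed_C
  lower_C := c.lower_C
  open_U := (c.step).choose_spec.1.1
  lower_U := (c.step).choose_spec.1.2.1
  subset := (c.step).choose_spec.1.2.2

/-- The right child. -/
noncomputable def right (c : CU X) : CU X where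
  C := (c.step).choose_spec.2.choose
  U := c.U
  closed_C := (c.step).choose_spec.2.choose_spec.1
  lower_C := (c.step).choose_spec.2.choose_spec.2.1
  open_U := c.open_U
  lower_U := c.lower_U
  subset := (c.step).choose_spec.2.choose_spec.2.2.2

theorem left_U_subset_right_C (c : CU X) : c.left.U ⊆ c.right.C :=
  (c.step).choose_spec.2.choose_spec.2.2.1

theorem left_U_subset (c : CU X) : c.left.U ⊆ c.U :=
  Subset.trans c.left_U_subset_right_C c.right.subset

theorem subset_right_C (c : CU X) : c.C ⊆ c.right.C :=
  Subset.trans c.left.subset c.left_U_subset_right_C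

@[simp] theorem left_C (c : CU X) : c.left.C = c.C := rfl
@[simp] theorem right_U (c : CU X) : c.right.U = c.U := rfl

/-- `n`-th approximation. -/
noncomputable def approx : ℕ → CU X → X → ℝ
  | 0, c, x => indicator c.Uᶜ 1 x
  | n + 1, c, x => midpoint ℝ (approx n c.left x) (approx n c.right x)

theorem approx_of_mem_C (c : CU X) (n : ℕ) {x : X} (hx : x ∈ c.C) : c.approx n x = 0 := by
  induction n generalizing c with
  | zero => exact indicator_of_notMem (fun (hU : x ∈ c.Uᶜ) => hU <| c.subset hx) _
  | succ n ihn =>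
    simp only [approx]
    rw [ihn, ihn, midpoint_self]
    exacts [c.subset_right_C hx, hx]

theorem approx_of_nmem_U (c : CU X) (n : ℕ) {x : X} (hx : x ∉ c.U) : c.approx n x = 1 := by
  induction n generalizing c with
  | zero =>
    rw [← mem_compl_iff] at hx
    exact indicator_of_mem hx _
  | succ n ihn =>
    simp only [approx]
    rw [ihn, ihn, midpoint_self]
    exacts [hx, fun hU => hx <| c.left_U_subset hU]

theorem approx_nonneg (c : CU X) (n : ℕ) (x : X) : 0 ≤ c.approx n x := by
  induction n generalizing c with
  | zero => exact indicator_nonneg (fun _ _ => zero_le_one) _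
  | succ n ihn =>
    simp only [approx, midpoint_eq_smul_add, invOf_eq_inv]
    refine mul_nonneg (inv_nonneg.2 zero_le_two) (add_nonneg ?_ ?_) <;> apply ihn

theorem approx_le_one (c : CU X) (n : ℕ) (x : X) : c.approx n x ≤ 1 := by
  induction n generalizing c with
  | zero => exact indicator_apply_le' (fun _ => le_rfl) fun _ => zero_le_one
  | succ n ihn =>
    simp only [approx, midpoint_eq_smul_add, invOf_eq_inv, smul_eq_mul, ← div_eq_inv_mul]
    have := add_le_add (ihn (left c)) (ihn (right c))
    norm_num at this
    exact Iff.mpr (div_le_one zero_lt_two) this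

theorem approx_monotone (c : CU X) (n : ℕ) : Monotone (c.approx n) := by
  induction n generalizing c with
  | zero =>
    intro x y hxy
    by_cases hx : x ∈ c.Uᶜ
    · have hy : y ∈ c.Uᶜ := fun hyU => hx (c.lower_U hxy hyU)
      simp [approx, indicator_of_mem hx, indicator_of_mem hy]
    · simp only [approx, indicator_of_notMem hx]
      exact indicator_nonneg (fun _ _ => zero_le_one) _
  | succ n ihn =>
    intro x y hxy
    exact midpoint_le_midpoint (ihn c.left hxy) (ihn c.right hxy)

theorem bddAbove_range_approx (c : CU X) (x : X) : BddAbove (range fun n => c.approx n x) :=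
  ⟨1, fun _ ⟨n, hn⟩ => hn ▸ c.approx_le_one n x⟩

theorem approx_le_approx_of_U_sub_C {c₁ c₂ : CU X} (h : c₁.U ⊆ c₂.C) (n₁ n₂ : ℕ) (x : X) :
    c₂.approx n₂ x ≤ c₁.approx n₁ x := by
  by_cases hx : x ∈ c₁.U
  · calc
      approx n₂ c₂ x = 0 := approx_of_mem_C _ _ (h hx)
      _ ≤ approx n₁ c₁ x := approx_nonneg _ _ _
  · calc
      approx n₂ c₂ x ≤ 1 := approx_le_one _ _ _
      _ = approx n₁ c₁ x := (approx_of_nmem_U _ _ hx).symm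

theorem approx_mem_Icc_right_left (c : CU X) (n : ℕ) (x : X) :
    c.approx n x ∈ Icc (c.right.approx n x) (c.left.approx n x) := by
  induction' n with n ihn generalizing c
  · exact ⟨le_rfl, indicator_le_indicator_of_subset (compl_subset_compl.2 c.left_U_subset)
      (fun _ => zero_le_one) _⟩
  · simp only [approx, mem_Icc]
    refine ⟨midpoint_le_midpoint ?_ (ihn _).1, midpoint_le_midpoint (ihn _).2 ?_⟩ <;>
      apply approx_le_approx_of_U_sub_C
    exacts [left_U_subset_right_C _, left_U_subset_right_C _]

theorem approx_le_succ (c : CU X) (n : ℕ) (x : X) : c.approx n x ≤ c.approx (n + 1) x := by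
  induction' n with n ihn generalizing c
  · simp only [approx, right_U, right_le_midpoint]
    exact (approx_mem_Icc_right_left c 0 x).2
  · rw [approx, approx]
    exact midpoint_le_midpoint (ihn _) (ihn _)

theorem approx_mono (c : CU X) (x : X) : Monotone fun n => c.approx n x :=
  monotone_nat_of_le_succ fun n => c.approx_le_succ n x

/-- The limit function. -/
protected noncomputable def lim (c : CU X) (x : X) : ℝ :=
  ⨆ n, c.approx n x

theorem tendsto_approx_atTop (c : CU X) (x : X) :
    Tendsto (fun n => c.approx n x) atTop (𝓝 <| c.lim x) :=
  tendsto_atTop_ciSup (c.approx_mono x) ⟨1, fun _ ⟨_, hn⟩ => hn ▸ c.approx_le_one _ _⟩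

theorem lim_of_mem_C (c : CU X) (x : X) (h : x ∈ c.C) : c.lim x = 0 := by
  simp only [CU.lim, approx_of_mem_C, h, ciSup_const]

theorem lim_of_nmem_U (c : CU X) (x : X) (h : x ∉ c.U) : c.lim x = 1 := by
  simp only [CU.lim, approx_of_nmem_U c _ h, ciSup_const]

theorem lim_eq_midpoint (c : CU X) (x : X) :
    c.lim x = midpoint ℝ (c.left.lim x) (c.right.lim x) := by
  refine tendsto_nhds_unique (c.tendsto_approx_atTop x) ((tendsto_add_atTop_iff_nat 1).1 ?_)
  simp only [approx]
  exact (c.left.tendsto_approx_atTop x).midpoint (c.right.tendsto_approx_atTop x)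

theorem approx_le_lim (c : CU X) (x : X) (n : ℕ) : c.approx n x ≤ c.lim x :=
  le_ciSup (c.bddAbove_range_approx x) _

theorem lim_nonneg (c : CU X) (x : X) : 0 ≤ c.lim x :=
  (c.approx_nonneg 0 x).trans (c.approx_le_lim x 0)

theorem lim_le_one (c : CU X) (x : X) : c.lim x ≤ 1 :=
  ciSup_le fun _ => c.approx_le_one _ _

theorem lim_mem_Icc (c : CU X) (x : X) : c.lim x ∈ Icc (0 : ℝ) 1 :=
  ⟨c.lim_nonneg x, c.lim_le_one x⟩

theorem monotone_lim (c : CU X) : Monotone c.lim := fun x y hxy =>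
  ciSup_le fun n => (c.approx_monotone n hxy).trans (c.approx_le_lim y n)

theorem continuous_lim (c : CU X) : Continuous c.lim := by
  obtain ⟨h0, h1234, h1⟩ : 0 < (2⁻¹ : ℝ) ∧ (2⁻¹ : ℝ) < 3 / 4 ∧ (3 / 4 : ℝ) < 1 := by norm_num
  refine
    continuous_iff_continuousAt.2 fun x =>
      (Metric.nhds_basis_closedBall_pow (h0.trans h1234) h1).tendsto_right_iff.2 fun n _ => ?_
  simp only [Metric.mem_closedBall]
  induction' n with n ihn generalizing c
  · filter_upwards with y
    rw [pow_zero]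
    exact Real.dist_le_of_mem_Icc_01 (c.lim_mem_Icc _) (c.lim_mem_Icc _)
  · by_cases hxl : x ∈ c.left.U
    · filter_upwards [IsOpen.mem_nhds c.left.open_U hxl, ihn c.left] with _ hyl hyd
      rw [pow_succ', c.lim_eq_midpoint, c.lim_eq_midpoint,
        c.right.lim_of_mem_C _ (c.left_U_subset_right_C hyl),
        c.right.lim_of_mem_C _ (c.left_U_subset_right_C hxl)]
      refine (dist_midpoint_midpoint_le _ _ _ _).trans ?_
      rw [dist_self, add_zero, div_eq_inv_mul]
      gcongr
    · replace hxl : x ∈ c.left.right.Cᶜ :=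
        compl_subset_compl.2 c.left.right.subset hxl
      filter_upwards [IsOpen.mem_nhds (isOpen_compl_iff.2 c.left.right.closed_C) hxl,
        ihn c.left.right, ihn c.right] with y hyl hydl hydr
      replace hxl : x ∉ c.left.left.U :=
        compl_subset_compl.2 c.left.left_U_subset_right_C hxl
      replace hyl : y ∉ c.left.left.U :=
        compl_subset_compl.2 c.left.left_U_subset_right_C hyl
      simp only [pow_succ, c.lim_eq_midpoint, c.left.lim_eq_midpoint,
        c.left.left.lim_of_nmem_U _ hxl, c.left.left.lim_of_nmem_U _ hyl]
      refine (dist_midpoint_midpoint_le _ _ _ _).trans ?_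
      refine (div_le_div_of_nonneg_right (add_le_add_left (dist_midpoint_midpoint_le _ _ _ _) _)
        zero_le_two).trans ?_
      rw [dist_self, zero_add]
      set r := (3 / 4 : ℝ) ^ n
      calc _ ≤ (r / 2 + r) / 2 := by gcongr
        _ = _ := by field_simp; ring

end CU

end OrdUrysohns

/-- Ordered Urysohn lemma for compact pospaces. -/
theorem exists_monotone_urysohn {A B : Set Z} (hA : IsClosed A) (hAl : IsLowerSet A)
    (hB : IsClosed B) (hBu : IsUpperSet B) (hd : Disjoint A B) :
    ∃ f : Z → ℝ, Continuous f ∧ Monotone f ∧ EqOn f 0 A ∧ EqOn f 1 B ∧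
      ∀ x, f x ∈ Icc (0 : ℝ) 1 := by
  set c : OrdUrysohns.CU Z :=
    { C := A
      U := Bᶜ
      closed_C := hA
      lower_C := hAl
      open_U := hB.isOpen_compl
      lower_U := hBu.compl
      subset := hd.subset_compl_right }
  exact ⟨c.lim, c.continuous_lim, c.monotone_lim, fun x hx => c.lim_of_mem_C x hx,
    fun x hx => c.lim_of_nmem_U x (fun h => h hx), c.lim_mem_Icc⟩

end OrdUrysohn

/-- A continuous monotone map between compact ordered spaces is surjective iff it is an
epimorphism with respect to continuous monotone maps into `[0,1]`. -/
theorem surjective_iff_epi {X Y : Type*}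
    [TopologicalSpace X] [CompactSpace X] [PartialOrder X] [OrderClosedTopology X]
    [TopologicalSpace Y] [CompactSpace Y] [PartialOrder Y] [OrderClosedTopology Y]
    {f : X → Y} (hfc : Continuous f) (hfm : Monotone f) :
    Function.Surjective f ↔
      ∀ g₁ g₂ : Y → unitInterval, Continuous g₁ → Monotone g₁ →
        Continuous g₂ → Monotone g₂ → g₁ ∘ f = g₂ ∘ f → g₁ = g₂ := by
  have : T2Space Y := ordT2
  constructor
  · intro hsurj g₁ g₂ _ _ _ _ h
    funext y
    obtain ⟨x, rfl⟩ := hsurj y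
    exact congrFun h x
  · intro H
    by_contra hns
    rw [Function.Surjective] at hns
    push_neg at hns
    obtain ⟨y, hy⟩ := hns
    -- M = range f is compact and closed
    have hMc : IsCompact (range f) := isCompact_range hfc
    have hMcl : IsClosed (range f) := hMc.isClosed
    have hyM : y ∉ range f := by rintro ⟨x, rfl⟩; exact hy x rfl
    -- first separation: ↓y from ↑(range f ∩ ↑y)
    set B : Set Y := range f ∩ {z | y ≤ z} with hB
    have hBc : IsCompact B := hMc.inter_right (isClosed_le continuous_const continuous_id)
    obtain ⟨ψ, hψc, hψm, hψ0, hψ1, hψI⟩ := exists_monotone_urysohn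
      (isClosed_le continuous_id continuous_const : IsClosed {z : Y | z ≤ y})
      (fun a b hba ha => le_trans hba ha)
      (isClosed_upperClosure_of_isCompact hBc) (upperClosure B).upper
      (by
        rw [Set.disjoint_left]
        intro z hzy hmem
        obtain ⟨b, hbB, hbz⟩ := mem_upperClosure.1 hmem
        obtain ⟨⟨x, rfl⟩, hyb⟩ := hbB
        exact hyM ⟨x, le_antisymm (le_trans hbz hzy) hyb⟩)
    -- second separation: ↓S from ↑y, where S = {m ∈ range f | ψ m ≤ 1/2}
    set S : Set Y := range f ∩ {z | ψ z ≤ 1 / 2} with hS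
    have hSc : IsCompact S := hMc.inter_right (isClosed_le hψc continuous_const)
    obtain ⟨θ, hθc, hθm, hθ0, hθ1, hθI⟩ := exists_monotone_urysohn
      (isClosed_lowerClosure_of_isCompact hSc) (lowerClosure S).lower
      (isClosed_le continuous_const continuous_id : IsClosed {z : Y | y ≤ z})
      (fun a b hab ha => le_trans ha hab)
      (by
        rw [Set.disjoint_left]
        intro z hmem hyz
        obtain ⟨s, ⟨hsM, hs2⟩, hzs⟩ := mem_lowerClosure.1 hmem
        have : s ∈ B := ⟨hsM, le_trans hyz hzs⟩
        have h1 := hψ1 (subset_upperClosure this)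
        simp only [Pi.one_apply] at h1
        have h2 : ψ s ≤ 1 / 2 := hs2
        linarith)
    -- the two functions into the unit interval
    have hmem₁ : ∀ z, ψ z ∈ unitInterval := fun z => hψI z
    have hmem₂ : ∀ z, max (ψ z) (θ z / 2) ∈ unitInterval := by
      intro z
      constructor
      · exact le_max_of_le_left (hψI z).1
      · exact max_le (hψI z).2 (by have := (hθI z).2; linarith)
    set g₁ : Y → unitInterval := fun z => ⟨ψ z, hmem₁ z⟩ with hg₁
    set g₂ : Y → unitInterval := fun z => ⟨max (ψ z) (θ z / 2), hmem₂ z⟩ with hg₂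
    have hθψ : ∀ z ∈ range f, θ z / 2 ≤ ψ z := by
      intro z hz
      rcases le_or_gt (ψ z) (1 / 2) with h | h
      · have : z ∈ S := ⟨hz, h⟩
        have h0 := hθ0 (subset_lowerClosure this)
        simp only [Pi.zero_apply] at h0
        rw [h0]
        simpa using (hψI z).1
      · have := (hθI z).2
        linarith
    have heq : g₁ ∘ f = g₂ ∘ f := by
      funext x
      have : f x ∈ range f := ⟨x, rfl⟩
      simp only [hg₁, hg₂, Function.comp_apply, Subtype.ext_iff]
      exact (max_eq_left (hθψ _ this)).symm
    have := H g₁ g₂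
      (Continuous.subtype_mk hψc _) (fun a b hab => Subtype.mk_le_mk.2 (hψm hab))
      (Continuous.subtype_mk (hψc.max (hθc.div_const 2)) _)
      (fun a b hab => Subtype.mk_le_mk.2 (max_le_max (hψm hab) (by
        have := hθm hab; linarith)))
      heq
    have hyval := congrFun this y
    have hψy : ψ y = 0 := hψ0 (le_refl y)
    have hθy : θ y = 1 := by
      have := hθ1 (le_refl y : y ∈ {z | y ≤ z})
      simpa using this
    rw [Subtype.ext_iff] at hyval
    simp only [hg₁, hg₂] at hyval
    rw [hψy, hθy] at hyval
    norm_num at hyval
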